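/- Let q ≥ 2 and n ≥ 2 be integers and let x1,...,xn ∈ ℝ^q. Let V = {x1,...,xn} (the finite set of these points) and let T be a connected simple graph on the vertex set V whose total Euclidean edge length Σ_{{u,v} ∈ E(T)} |u − v| is minimal among all connected simple graphs on V (a minimum spanning tree of the complete Euclidean graph on V). Then every edge {u,v} of T is a diameter of an inner ball associated with x1,...,xn; that is, for every edge {u,v} of T and every k ∈ {1,...,n}, |x_k − (u + v)/2| ≥ |u − v|/2. -/

import Mathlib

open scoped Classical

/-- The total Euclidean edge length of a simple graph `G` on a finite vertex
set `V` of points of a metric space. -/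
noncomputable def graphLength {E : Type*} [PseudoMetricSpace E] {V : Finset E}
    (G : SimpleGraph V) : ℝ :=
  ∑ e : Sym2 V,
    if e ∈ G.edgeSet then
      Sym2.lift ⟨fun (u v : V) => dist (u : E) (v : E), fun u v => dist_comm _ _⟩ e
    else 0

open SimpleGraph

noncomputable def elen {E : Type*} [PseudoMetricSpace E] {V : Finset E} : Sym2 V → ℝ :=
  Sym2.lift ⟨fun (u v : V) => dist (u : E) (v : E), fun u v => dist_comm _ _⟩

lemma elen_mk {E : Type*} [PseudoMetricSpace E] {V : Finset E} (a b : V) :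
    (elen s(a, b) : ℝ) = dist (a : E) (b : E) := by
  simp [elen]

lemma elen_nonneg {E : Type*} [PseudoMetricSpace E] {V : Finset E} (e : Sym2 V) :
    0 ≤ (elen e : ℝ) := by
  induction e using Sym2.inductionOn with
  | hf a b => rw [elen_mk]; exact dist_nonneg

lemma graphLength_eq {E : Type*} [PseudoMetricSpace E] {V : Finset E} (G : SimpleGraph V) :
    graphLength G = ∑ e : Sym2 V, (if e ∈ G.edgeSet then elen e else 0) := rfl

private lemma reach_del {V : Type*} (G : SimpleGraph V) (u v : V) {a b : V} (p : G.Walk a b) :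
    (G.deleteEdges {s(u,v)}).Reachable a b ∨
      ((G.deleteEdges {s(u,v)}).Reachable a u ∨ (G.deleteEdges {s(u,v)}).Reachable a v) := by
  induction p with
  | nil => exact Or.inl (Reachable.refl _)
  | @cons a c _ h p ih =>
    by_cases he : s(a, c) = s(u, v)
    · rw [Sym2.eq_iff] at he
      rcases he with ⟨rfl, rfl⟩ | ⟨rfl, rfl⟩
      · exact Or.inr (Or.inl (Reachable.refl _))
      · exact Or.inr (Or.inr (Reachable.refl _))
    · have h' : (G.deleteEdges {s(u,v)}).Adj a c := by
        rw [SimpleGraph.deleteEdges_adj]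
        exact ⟨h, by simpa using he⟩
      rcases ih with hr | hr | hr
      · exact Or.inl (h'.reachable.trans hr)
      · exact Or.inr (Or.inl (h'.reachable.trans hr))
      · exact Or.inr (Or.inr (h'.reachable.trans hr))

private lemma exists_shorter_aux {E : Type*} [MetricSpace E] {V : Finset E}
    (G : SimpleGraph V) (hG : G.Connected) {u v w : V} (huv : G.Adj u v)
    (hw1 : w ≠ u) (hw2 : w ≠ v)
    (hreach : (G.deleteEdges {s(u,v)}).Reachable w u)
    (hlt : dist (w : E) (v : E) < dist (u : E) (v : E)) :
    ∃ H : SimpleGraph V, H.Connected ∧ graphLength H < graphLength G := by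
  set G' := G.deleteEdges {s(u,v)} with hG'
  set H := G' ⊔ SimpleGraph.fromEdgeSet {s(w,v)} with hH
  have hle : G' ≤ H := le_sup_left
  have hwvadj : H.Adj w v := by
    rw [hH, SimpleGraph.sup_adj, SimpleGraph.fromEdgeSet_adj]
    exact Or.inr ⟨rfl, hw2⟩
  have hcon : H.Connected := by
    rw [SimpleGraph.connected_iff]
    refine ⟨?_, hG.nonempty⟩
    have key : ∀ a, H.Reachable a v := by
      intro a
      obtain ⟨p⟩ := hG.preconnected a u
      have hu2v : H.Reachable u v := ((hreach.mono hle).symm).trans hwvadj.reachable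
      rcases reach_del G u v p with hr | hr | hr
      · exact (hr.mono hle).trans hu2v
      · exact (hr.mono hle).trans hu2v
      · exact hr.mono hle
    intro a b
    exact (key a).trans (key b).symm
  refine ⟨H, hcon, ?_⟩
  have hab : s(u, v) ≠ s(w, v) := by
    intro h
    rw [Sym2.eq_iff] at h
    rcases h with ⟨h1, _⟩ | ⟨h1, h2⟩
    · exact hw1 h1.symm
    · exact huv.ne h1
  have hHe : ∀ e : Sym2 V, e ∈ H.edgeSet ↔ (e ∈ G.edgeSet ∧ e ≠ s(u,v)) ∨ e = s(w,v) := by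
    intro e
    rw [hH, SimpleGraph.edgeSet_sup, hG', SimpleGraph.edgeSet_deleteEdges,
      SimpleGraph.edgeSet_fromEdgeSet]
    constructor
    · rintro (⟨h1, h2⟩ | ⟨h1, _⟩)
      · exact Or.inl ⟨h1, by simpa using h2⟩
      · exact Or.inr h1
    · rintro (⟨h1, h2⟩ | rfl)
      · exact Or.inl ⟨h1, by simpa using h2⟩
      · refine Or.inr ⟨rfl, ?_⟩
        simp only [Sym2.mem_diagSet, Sym2.isDiag_iff_proj_eq]
        exact fun h => hw2 (by exact_mod_cast h)
  have hkey : graphLength H + dist (u : E) (v : E) ≤ graphLength G + dist (w : E) (v : E) := by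
    have h1 : graphLength H + dist (u : E) (v : E) =
        ∑ e : Sym2 V, ((if e ∈ H.edgeSet then elen e else 0)
          + (if e = s(u,v) then dist (u : E) (v : E) else 0)) := by
      rw [graphLength_eq, Finset.sum_add_distrib, Finset.sum_ite_eq' Finset.univ (s(u,v))]
      simp only [Finset.mem_univ, if_true]
      all_goals congr 1
      all_goals refine Finset.sum_congr rfl fun e _ => ?_
      all_goals congr 1
    have h2 : graphLength G + dist (w : E) (v : E) =
        ∑ e : Sym2 V, ((if e ∈ G.edgeSet then elen e else 0)
          + (if e = s(w,v) then dist (w : E) (v : E) else 0)) := by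
      rw [graphLength_eq, Finset.sum_add_distrib, Finset.sum_ite_eq' Finset.univ (s(w,v))]
      simp only [Finset.mem_univ, if_true]
      all_goals congr 1
      all_goals refine Finset.sum_congr rfl fun e _ => ?_
      all_goals congr 1
    rw [h1, h2]
    apply Finset.sum_le_sum
    intro e _
    by_cases hea : e = s(u,v)
    · subst hea
      have hH0 : s(u,v) ∉ H.edgeSet := by
        rw [hHe]
        rintro (⟨_, h⟩ | h)
        · exact h rfl
        · exact hab h
      have hg : s(u,v) ∈ G.edgeSet := (SimpleGraph.mem_edgeSet _).mpr huv
      simp [hH0, hg, hab, elen_mk]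
    · by_cases heb : e = s(w,v)
      · subst heb
        simp only [if_neg hea, eq_self_iff_true, if_true, add_zero]
        have hwv : (elen (s(w,v) : Sym2 V) : ℝ) = dist (w : E) (v : E) := elen_mk w v
        by_cases hm1 : s(w,v) ∈ H.edgeSet <;> by_cases hm2 : s(w,v) ∈ G.edgeSet <;>
          [rw [if_pos hm1, if_pos hm2]; rw [if_pos hm1, if_neg hm2];
           rw [if_neg hm1, if_pos hm2]; rw [if_neg hm1, if_neg hm2]] <;>
          [skip; skip; skip; skip] <;>
          first
            | (rw [hwv]; have := elen_nonneg (s(w,v) : Sym2 V); linarith)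
            | (have := elen_nonneg (s(w,v) : Sym2 V); have := dist_nonneg (x := (w:E)) (y := (v:E)); linarith)
      · simp only [if_neg hea, if_neg heb, add_zero]
        have hiff : e ∈ H.edgeSet ↔ e ∈ G.edgeSet := by
          rw [hHe]
          constructor
          · rintro (⟨h1, _⟩ | rfl)
            · exact h1
            · exact absurd rfl heb
          · exact fun h => Or.inl ⟨h, hea⟩
        by_cases hg : e ∈ G.edgeSet
        · rw [if_pos hg, if_pos (hiff.mpr hg)]
        · rw [if_neg hg, if_neg (fun h => hg (hiff.mp h))]
  linarith

/-- Every edge of a minimum spanning tree of the complete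
Euclidean graph on the points `x₁,…,xₙ` of `ℝ^q` is a diameter of an inner
ball associated with `x₁,…,xₙ`: no point `x k` lies in the open ball having
the edge as a diameter. -/
theorem mst_edges_are_inner_ball_diameters (q n : ℕ) (hq : 2 ≤ q) (hn : 2 ≤ n)
    (x : Fin n → EuclideanSpace ℝ (Fin q))
    (V : Finset (EuclideanSpace ℝ (Fin q))) (hV : V = Finset.univ.image x)
    (T : SimpleGraph V) (hT : T.Connected)
    (hmin : ∀ H : SimpleGraph V, H.Connected → graphLength T ≤ graphLength H) :
    ∀ u v : V, T.Adj u v → ∀ k : Fin n,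
      dist (u : EuclideanSpace ℝ (Fin q)) (v : EuclideanSpace ℝ (Fin q)) / 2 ≤
        dist (x k) (midpoint ℝ (u : EuclideanSpace ℝ (Fin q)) (v : EuclideanSpace ℝ (Fin q))) := by
  intro u v hadj k
  by_contra hcon
  push_neg at hcon
  have hmem : x k ∈ V := by
    rw [hV]; exact Finset.mem_image_of_mem x (Finset.mem_univ k)
  set m := midpoint ℝ (u : EuclideanSpace ℝ (Fin q)) (v : EuclideanSpace ℝ (Fin q)) with hm
  have hmu : dist (u : EuclideanSpace ℝ (Fin q)) m =
      dist (u : EuclideanSpace ℝ (Fin q)) (v : EuclideanSpace ℝ (Fin q)) / 2 := by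
    rw [hm, dist_left_midpoint, Real.norm_two]
    ring
  have hmv : dist (v : EuclideanSpace ℝ (Fin q)) m =
      dist (u : EuclideanSpace ℝ (Fin q)) (v : EuclideanSpace ℝ (Fin q)) / 2 := by
    rw [hm, midpoint_comm, dist_left_midpoint, Real.norm_two,
      dist_comm (v : EuclideanSpace ℝ (Fin q))]
    ring
  have hu : dist (x k) (u : EuclideanSpace ℝ (Fin q)) <
      dist (u : EuclideanSpace ℝ (Fin q)) (v : EuclideanSpace ℝ (Fin q)) := by
    have := dist_triangle (x k) m (u : EuclideanSpace ℝ (Fin q))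
    rw [dist_comm m] at this
    linarith
  have hv : dist (x k) (v : EuclideanSpace ℝ (Fin q)) <
      dist (u : EuclideanSpace ℝ (Fin q)) (v : EuclideanSpace ℝ (Fin q)) := by
    have := dist_triangle (x k) m (v : EuclideanSpace ℝ (Fin q))
    rw [dist_comm m] at this
    linarith
  set w : V := ⟨x k, hmem⟩ with hwdef
  have hw1 : w ≠ u := by
    intro h
    have hxk : x k = (u : EuclideanSpace ℝ (Fin q)) := congrArg Subtype.val h
    rw [hxk, hmu] at hcon
    linarith
  have hw2 : w ≠ v := by
    intro h
    have hxk : x k = (v : EuclideanSpace ℝ (Fin q)) := congrArg Subtype.val h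
    rw [hxk, hmv] at hcon
    linarith
  obtain ⟨p⟩ := hT.preconnected w u
  have hshort : ∃ H : SimpleGraph V, H.Connected ∧ graphLength H < graphLength T := by
    rcases reach_del T u v p with hr | hr | hr
    · exact exists_shorter_aux T hT hadj hw1 hw2 hr hv
    · exact exists_shorter_aux T hT hadj hw1 hw2 hr hv
    · have hset : ({s(v,u)} : Set (Sym2 V)) = {s(u,v)} := by
        rw [Sym2.eq_swap]
      have hr' : (T.deleteEdges {s(v,u)}).Reachable w v := by
        rw [hset]; exact hr
      have hlt' : dist (w : EuclideanSpace ℝ (Fin q)) (u : EuclideanSpace ℝ (Fin q)) <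
          dist (v : EuclideanSpace ℝ (Fin q)) (u : EuclideanSpace ℝ (Fin q)) := by
        rw [dist_comm (v : EuclideanSpace ℝ (Fin q))]
        exact hu
      exact exists_shorter_aux T hT hadj.symm hw2 hw1 hr' hlt'
  obtain ⟨H, hHcon, hHlt⟩ := hshort
  exact absurd (hmin H hHcon) (not_le.mpr hHlt)
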